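/- Key inequality in the proof of Theorem 5 (validity of the discrete probability-mass p-value). Let X be a random variable taking values in a countable set 𝒯 with probability mass function P(x) = ℙ(X = x). Define T(x) = Σ_{x̄ ∈ 𝒯 : P(x̄) > P(x)} P(x̄), the total probability mass of all values strictly more probable than x. Then for every α ∈ [0,1], ℙ(T(X) ≤ α) ≥ α. -/

import Mathlib

open MeasureTheory

/-- Key inequality in the proof of Theorem 5: for a discrete random variable `X` on a
countable set with pmf `P`, the statistic `T(x) = Σ_{xb : P(xb) > P(x)} P(xb)` satisfies
`ℙ(T(X) ≤ α) ≥ α` for every `α ∈ [0,1]`. -/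
theorem discrete_pvalue_valid
    {Ω 𝒯 : Type*} [MeasurableSpace Ω] [MeasurableSpace 𝒯]
    [Countable 𝒯] [MeasurableSingletonClass 𝒯]
    (ℙ : Measure Ω) [IsProbabilityMeasure ℙ]
    (X : Ω → 𝒯) (hX : Measurable X)
    (P : 𝒯 → ℝ) (hP : ∀ x, P x = (ℙ (X ⁻¹' {x})).toReal)
    (T : 𝒯 → ℝ)
    (hT : ∀ x, T x = ∑' xb : {y : 𝒯 // P x < P y}, P xb.1)
    (α : ℝ) (hα : α ∈ Set.Icc (0:ℝ) 1) :
    ENNReal.ofReal α ≤ ℙ {ω | T (X ω) ≤ α} := by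
  obtain ⟨hα0, hα1⟩ := hα
  set G : ℝ → ENNReal := fun t => ℙ (X ⁻¹' {y | t < P y}) with hGdef
  have hPnn : ∀ x, 0 ≤ P x := fun x => (hP x) ▸ ENNReal.toReal_nonneg
  have hGne : ∀ t, G t ≠ ⊤ := fun t => measure_ne_top ℙ _
  have hGanti : ∀ ⦃s t : ℝ⦄, s ≤ t → G t ≤ G s := by
    intro s t hst
    exact measure_mono (Set.preimage_mono (fun y hy => lt_of_le_of_lt hst hy))
  -- T x = (G (P x)).toReal
  have hTG : ∀ x, T x = (G (P x)).toReal := by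
    intro x
    rw [hT x]
    have h1 : ∀ xb : {y : 𝒯 // P x < P y}, P xb.1 = (ℙ (X ⁻¹' {xb.1})).toReal :=
      fun xb => hP _
    rw [tsum_congr h1, ← ENNReal.tsum_toReal_eq (fun xb => measure_ne_top ℙ _)]
    congr 1
    exact tsum_measure_preimage_singleton (Set.to_countable _)
      (fun y _ => hX (MeasurableSet.singleton y))
  have hTle : ∀ x, T x ≤ α ↔ G (P x) ≤ ENNReal.ofReal α := by
    intro x
    rw [hTG x, ← ENNReal.le_ofReal_iff_toReal_le (hGne _) hα0]
  -- the threshold set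
  set D : Set ℝ := {t : ℝ | 0 ≤ t ∧ G t ≤ ENNReal.ofReal α} with hDdef
  have h1D : (1:ℝ) ∈ D := by
    constructor
    · norm_num
    · have : {y : 𝒯 | (1:ℝ) < P y} = ∅ := by
        ext y
        simp only [Set.mem_setOf_eq, Set.mem_empty_iff_false, iff_false, not_lt]
        rw [hP y]
        have := prob_le_one (μ := ℙ) (s := X ⁻¹' {y})
        calc (ℙ (X ⁻¹' {y})).toReal ≤ (1 : ENNReal).toReal :=
              ENNReal.toReal_mono (by norm_num) this
          _ = 1 := by simp
      simp only [hGdef, this, Set.preimage_empty, measure_empty]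
      exact zero_le
  have hDne : D.Nonempty := ⟨1, h1D⟩
  have hDbdd : BddBelow D := ⟨0, fun t ht => ht.1⟩
  set c : ℝ := sInf D with hcdef
  have hc0 : 0 ≤ c := le_csInf hDne (fun t ht => ht.1)
  -- Step A: G c ≤ ofReal α
  have hGc : G c ≤ ENNReal.ofReal α := by
    have hsub : {y : 𝒯 | c < P y} ⊆
        ⋃ q : {q : ℚ // (q:ℝ) ∈ D}, {y : 𝒯 | (q.1:ℝ) < P y} := by
      intro y hy
      obtain ⟨t, htD, htc⟩ := exists_lt_of_csInf_lt hDne hy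
      obtain ⟨q, hq1, hq2⟩ := exists_rat_btwn htc
      refine Set.mem_iUnion.2 ⟨⟨q, le_trans htD.1 hq1.le, le_trans (hGanti hq1.le) htD.2⟩, hq2⟩
    have hdir : Directed (· ⊆ ·) fun q : {q : ℚ // (q:ℝ) ∈ D} =>
        X ⁻¹' {y : 𝒯 | (q.1:ℝ) < P y} := by
      rintro ⟨q, hq⟩ ⟨r, hr⟩
      rcases le_total q r with h | h
      · refine ⟨⟨q, hq⟩, subset_rfl, Set.preimage_mono (fun y hy => ?_)⟩
        have hqr : (q:ℝ) ≤ (r:ℝ) := by exact_mod_cast h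
        exact lt_of_le_of_lt hqr hy
      · refine ⟨⟨r, hr⟩, Set.preimage_mono (fun y hy => ?_), subset_rfl⟩
        have hqr : (r:ℝ) ≤ (q:ℝ) := by exact_mod_cast h
        exact lt_of_le_of_lt hqr hy
    calc G c ≤ ℙ (X ⁻¹' ⋃ q : {q : ℚ // (q:ℝ) ∈ D}, {y : 𝒯 | (q.1:ℝ) < P y}) :=
          measure_mono (Set.preimage_mono hsub)
      _ = ℙ (⋃ q : {q : ℚ // (q:ℝ) ∈ D}, X ⁻¹' {y : 𝒯 | (q.1:ℝ) < P y}) := by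
          rw [Set.preimage_iUnion]
      _ = ⨆ q : {q : ℚ // (q:ℝ) ∈ D}, G (q.1:ℝ) := hdir.measure_iUnion
      _ ≤ ENNReal.ofReal α := iSup_le fun q => q.2.2
  have hcD : c ∈ D := ⟨hc0, hGc⟩
  -- Step B: {x | T x ≤ α} = {x | c ≤ P x}
  have hSeq : {x : 𝒯 | T x ≤ α} = {x : 𝒯 | c ≤ P x} := by
    ext x
    simp only [Set.mem_setOf_eq, hTle x]
    constructor
    · intro h
      by_contra hlt
      push_neg at hlt
      exact absurd ⟨hPnn x, h⟩ (fun hm => not_le.2 hlt (csInf_le hDbdd hm))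
    · intro h
      exact le_trans (hGanti h) hGc
  -- Step C: ofReal α ≤ ℙ (X ⁻¹' {x | c ≤ P x})
  have hkey : ENNReal.ofReal α ≤ ℙ (X ⁻¹' {x : 𝒯 | c ≤ P x}) := by
    set s : ℕ → Set 𝒯 := fun n => {y : 𝒯 | c - 1/(n+1) < P y} with hsdef
    have hsInter : (⋂ n, s n) = {x : 𝒯 | c ≤ P x} := by
      ext y
      simp only [Set.mem_iInter, hsdef, Set.mem_setOf_eq]
      constructor
      · intro h
        by_contra hlt
        push_neg at hlt
        obtain ⟨n, hn⟩ := exists_nat_one_div_lt (sub_pos.2 hlt)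
        have := h n
        linarith
      · intro h n
        have : (0:ℝ) < 1/(n+1) := by positivity
        linarith
    have hanti : Antitone fun n : ℕ => X ⁻¹' s n := by
      intro m n hmn
      apply Set.preimage_mono
      intro y hy
      simp only [hsdef, Set.mem_setOf_eq] at hy ⊢
      have h1 : (1:ℝ)/(n+1) ≤ 1/(m+1) := by
        apply one_div_le_one_div_of_le (by positivity)
        exact_mod_cast by exact_mod_cast add_le_add_left (Nat.cast_le.2 hmn) 1
      linarith
    have heach : ∀ n : ℕ, ENNReal.ofReal α ≤ ℙ (X ⁻¹' s n) := by
      intro n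
      rcases lt_or_ge (c - 1/(n+1)) 0 with hneg | hpos
      · have : s n = Set.univ := by
          ext y
          simp only [hsdef, Set.mem_setOf_eq, Set.mem_univ, iff_true]
          exact lt_of_lt_of_le hneg (hPnn y)
        rw [this]
        simp only [Set.preimage_univ, measure_univ]
        calc ENNReal.ofReal α ≤ ENNReal.ofReal 1 := ENNReal.ofReal_le_ofReal hα1
          _ = 1 := by norm_num
      · have hnotD : (c - 1/(n+1)) ∉ D := fun hm =>
          absurd (csInf_le hDbdd hm) (by
            push_neg
            have : (0:ℝ) < 1/((n:ℝ)+1) := by positivity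
            linarith)
        have : ¬ (G (c - 1/(n+1)) ≤ ENNReal.ofReal α) := fun h => hnotD ⟨hpos, h⟩
        exact (not_le.1 this).le
    have hmeas : ∀ n, NullMeasurableSet (X ⁻¹' s n) ℙ :=
      fun n => (hX (Set.to_countable (s n)).measurableSet).nullMeasurableSet
    have := (hanti.directed_ge).measure_iInter (μ := ℙ) hmeas ⟨0, measure_ne_top ℙ _⟩
    calc ENNReal.ofReal α ≤ ⨅ n, ℙ (X ⁻¹' s n) := le_iInf heach
      _ = ℙ (⋂ n, X ⁻¹' s n) := this.symm
      _ = ℙ (X ⁻¹' {x : 𝒯 | c ≤ P x}) := by rw [← Set.preimage_iInter, hsInter]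
  have hfinal : {ω | T (X ω) ≤ α} = X ⁻¹' {x : 𝒯 | c ≤ P x} := by
    ext ω
    simp only [Set.mem_setOf_eq, Set.mem_preimage]
    have := Set.ext_iff.1 hSeq (X ω)
    simpa using this
  rw [hfinal]
  exact hkey
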